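/- For every n ≥ 1, the set of n × n Erdős matrices is finite; more precisely, its cardinality is at most ∑_{j=1}^{(n-1)²+1} C(n!, j), where C(a,b) denotes the binomial coefficient. -/

import Mathlib

open Matrix BigOperators

def IsBistochastic {n : ℕ} (A : Matrix (Fin n) (Fin n) ℝ) : Prop :=
  (∀ i j, 0 ≤ A i j) ∧ (∀ i, ∑ j, A i j = 1) ∧ (∀ j, ∑ i, A i j = 1)

noncomputable def maxTr {n : ℕ} (A : Matrix (Fin n) (Fin n) ℝ) : ℝ :=
  ⨆ σ : Equiv.Perm (Fin n), ∑ i, A i (σ i)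

def frobSq {n : ℕ} (A : Matrix (Fin n) (Fin n) ℝ) : ℝ :=
  ∑ i, ∑ j, (A i j) ^ 2

/-- A bistochastic matrix is an Erdős matrix if `‖A‖_F² = maxTr A`. -/
def IsErdos {n : ℕ} (A : Matrix (Fin n) (Fin n) ℝ) : Prop :=
  IsBistochastic A ∧ frobSq A = maxTr A

namespace ErdosFinAux

variable {n : ℕ}
variable {n : ℕ}

noncomputable def ip {n : ℕ} (A B : Matrix (Fin n) (Fin n) ℝ) : ℝ :=
  ∑ i, ∑ j, A i j * B i j

lemma ip_sum_smul {ι : Type*} (A : Matrix (Fin n) (Fin n) ℝ) (s : Finset ι)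
    (w : ι → ℝ) (M : ι → Matrix (Fin n) (Fin n) ℝ) :
    ip A (∑ σ ∈ s, w σ • M σ) = ∑ σ ∈ s, w σ * ip A (M σ) := by
  have h : ∀ i j, (∑ σ ∈ s, w σ • M σ) i j = ∑ σ ∈ s, w σ * M σ i j := fun i j => by
    simp [Matrix.sum_apply]
  unfold ip
  simp only [h]
  calc ∑ i, ∑ j, A i j * (∑ σ ∈ s, w σ * M σ i j)
      = ∑ i, ∑ j, ∑ σ ∈ s, w σ * (A i j * M σ i j) := by
        refine Finset.sum_congr rfl fun i _ => Finset.sum_congr rfl fun j _ => ?_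
        rw [Finset.mul_sum]; exact Finset.sum_congr rfl fun σ _ => by ring
    _ = ∑ i, ∑ σ ∈ s, ∑ j, w σ * (A i j * M σ i j) :=
        Finset.sum_congr rfl fun i _ => Finset.sum_comm
    _ = ∑ σ ∈ s, ∑ i, ∑ j, w σ * (A i j * M σ i j) := Finset.sum_comm
    _ = ∑ σ ∈ s, w σ * ∑ i, ∑ j, A i j * M σ i j := by
        refine Finset.sum_congr rfl fun σ _ => ?_
        simp [Finset.mul_sum]

lemma ip_smul_right (A B : Matrix (Fin n) (Fin n) ℝ) (c : ℝ) :
    ip A (c • B) = c * ip A B := by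
  simp [ip, Finset.mul_sum]
  exact Finset.sum_congr rfl fun i _ => Finset.sum_congr rfl fun j _ => by ring

lemma ip_add_right (A B C : Matrix (Fin n) (Fin n) ℝ) :
    ip A (B + C) = ip A B + ip A C := by
  simp [ip, mul_add, Finset.sum_add_distrib]

lemma convex_ip_eq (Y : Matrix (Fin n) (Fin n) ℝ) (c : ℝ) :
    Convex ℝ {X : Matrix (Fin n) (Fin n) ℝ | ip Y X = c} := by
  intro x hx y hy a b ha hb hab
  simp only [Set.mem_setOf_eq] at hx hy ⊢
  rw [ip_add_right, ip_smul_right, ip_smul_right, hx, hy, ← add_mul, hab, one_mul]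

lemma ip_symm (A B : Matrix (Fin n) (Fin n) ℝ) : ip A B = ip B A := by
  simp [ip, mul_comm]

lemma eq_of_key {t : Set (Matrix (Fin n) (Fin n) ℝ)} {A B : Matrix (Fin n) (Fin n) ℝ}
    (hA1 : A ∈ convexHull ℝ t) (hA2 : ∀ P ∈ t, ip A P = ip A A)
    (hB1 : B ∈ convexHull ℝ t) (hB2 : ∀ P ∈ t, ip B P = ip B B) : A = B := by
  have hAB : ip A B = ip A A :=
    convexHull_min hA2 (convex_ip_eq A (ip A A)) hB1
  have hBA : ip B A = ip B B :=
    convexHull_min hB2 (convex_ip_eq B (ip B B)) hA1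
  have hBA' : ip A B = ip B B := by rw [← hBA, ip_symm]
  have hz : ∑ i, ∑ j, (A i j - B i j) ^ 2 = 0 := by
    have : ∑ i, ∑ j, (A i j - B i j) ^ 2
        = ip A A - ip A B - (ip A B - ip B B) := by
      simp only [ip, ← Finset.sum_sub_distrib]
      exact Finset.sum_congr rfl fun i _ => Finset.sum_congr rfl fun j _ => by ring
    rw [this]; linarith [hAB, hBA']
  ext i j
  have h1 : ∀ i ∈ Finset.univ, (0:ℝ) ≤ ∑ j, (A i j - B i j)^2 :=
    fun i _ => Finset.sum_nonneg fun j _ => sq_nonneg _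
  have h2 := (Finset.sum_eq_zero_iff_of_nonneg h1).1 hz i (Finset.mem_univ i)
  have h3 := (Finset.sum_eq_zero_iff_of_nonneg (fun j _ => sq_nonneg (A i j - B i j))).1 h2 j
    (Finset.mem_univ j)
  have := pow_eq_zero_iff (n := 2) (by norm_num) |>.1 h3
  linarith [this]


lemma ip_perm (A : Matrix (Fin n) (Fin n) ℝ) (σ : Equiv.Perm (Fin n)) :
    ip A (σ.permMatrix ℝ) = ∑ i, A i (σ i) := by
  unfold ip
  refine Finset.sum_congr rfl fun i _ => ?_
  rw [Finset.sum_eq_single (σ i)]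
  · simp [Equiv.Perm.permMatrix, PEquiv.toMatrix_apply, Equiv.toPEquiv_apply]
  · intro b _ hb
    simp [Equiv.Perm.permMatrix, PEquiv.toMatrix_apply, Equiv.toPEquiv_apply, hb.symm]
  · simp

lemma permMatrix_injective :
    Function.Injective (fun σ : Equiv.Perm (Fin n) => σ.permMatrix ℝ) := by
  intro σ τ h
  apply Equiv.ext
  intro i
  have h2 := congr_fun (congr_fun h i) (σ i)
  simp only [Equiv.Perm.permMatrix, PEquiv.toMatrix_apply, Equiv.toPEquiv_apply,
    Option.mem_def, Option.some.injEq] at h2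
  rcases eq_or_ne (τ i) (σ i) with h3 | h3
  · exact h3.symm
  · simp [h3] at h2

/-- matrices with zero row and column sums -/
def V (n : ℕ) : Submodule ℝ (Matrix (Fin n) (Fin n) ℝ) where
  carrier := {M | (∀ i, ∑ j, M i j = 0) ∧ (∀ j, ∑ i, M i j = 0)}
  add_mem' := by
    rintro a b ⟨ha1, ha2⟩ ⟨hb1, hb2⟩
    constructor <;> intro k <;>
      simp [Finset.sum_add_distrib, ha1 k, ha2 k, hb1 k, hb2 k]
  zero_mem' := by constructor <;> intro k <;> simp
  smul_mem' := by
    rintro c a ⟨h1, h2⟩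
    constructor <;> intro k <;> simp [← Finset.mul_sum, h1 k, h2 k]

lemma zero_of_V_block (hn : 1 ≤ n) (M : Matrix (Fin n) (Fin n) ℝ)
    (hrow : ∀ i, ∑ j, M i j = 0) (hcol : ∀ j, ∑ i, M i j = 0)
    (hblock : ∀ i j : Fin n, i.val < n - 1 → j.val < n - 1 → M i j = 0) : M = 0 := by
  have hlt : n - 1 < n := by omega
  set ℓ : Fin n := ⟨n - 1, hlt⟩ with hℓ
  have hval : ∀ i : Fin n, i ≠ ℓ → i.val < n - 1 := by
    intro i hi
    have : i.val ≠ n - 1 := fun h => hi (Fin.ext h)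
    have := i.isLt; omega
  have hlastcol : ∀ i : Fin n, i.val < n - 1 → M i ℓ = 0 := by
    intro i hi
    have := hrow i
    rwa [Finset.sum_eq_single ℓ
      (fun b _ hb => hblock i b hi (hval b hb))
      (fun h => absurd (Finset.mem_univ ℓ) h)] at this
  have hlastrow : ∀ j : Fin n, j.val < n - 1 → M ℓ j = 0 := by
    intro j hj
    have := hcol j
    rwa [Finset.sum_eq_single ℓ
      (fun b _ hb => hblock b j (hval b hb) hj)
      (fun h => absurd (Finset.mem_univ ℓ) h)] at this
  have hcorner : M ℓ ℓ = 0 := by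
    have := hrow ℓ
    rwa [Finset.sum_eq_single ℓ
      (fun b _ hb => hlastrow b (hval b hb))
      (fun h => absurd (Finset.mem_univ ℓ) h)] at this
  ext i j
  simp only [Matrix.zero_apply]
  rcases eq_or_ne i ℓ with hi | hi <;> rcases eq_or_ne j ℓ with hj | hj
  · rw [hi, hj]; exact hcorner
  · rw [hi]; exact hlastrow j (hval j hj)
  · rw [hj]; exact hlastcol i (hval i hi)
  · exact hblock i j (hval i hi) (hval j hj)

lemma card_le_of_affineIndependent (hn : 1 ≤ n) (t : Finset (Matrix (Fin n) (Fin n) ℝ))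
    (hai : AffineIndependent ℝ ((↑) : t → Matrix (Fin n) (Fin n) ℝ))
    (hsum : ∀ M ∈ t, (∀ i, ∑ j, M i j = 1) ∧ (∀ j, ∑ i, M i j = 1))
    (hne : t.Nonempty) : t.card ≤ (n - 1) ^ 2 + 1 := by
  classical
  obtain ⟨p₀, hp₀⟩ := hne
  set i₀ : t := ⟨p₀, hp₀⟩ with hi₀
  rw [affineIndependent_iff_linearIndependent_vsub ℝ _ i₀] at hai
  -- the differences lie in V n
  have hmem : ∀ x : {x : t // x ≠ i₀}, ((x : t) : Matrix (Fin n) (Fin n) ℝ) -ᵥ (i₀ : Matrix (Fin n) (Fin n) ℝ) ∈ V n := by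
    intro x
    obtain ⟨h1, h2⟩ := hsum _ (x.1).2
    obtain ⟨h3, h4⟩ := hsum _ i₀.2
    constructor <;> intro k <;>
      simp [vsub_eq_sub, Matrix.sub_apply, Finset.sum_sub_distrib, h1 k, h2 k, h3 k, h4 k]
  let g : {x : t // x ≠ i₀} → V n := fun x => ⟨_, hmem x⟩
  have hg : LinearIndependent ℝ g := by
    apply LinearIndependent.of_comp (V n).subtype
    exact hai
  have hcard := hg.fintype_card_le_finrank
  -- finrank (V n) ≤ (n-1)^2
  have hle : n - 1 ≤ n := by omega
  let φ : Matrix (Fin n) (Fin n) ℝ →ₗ[ℝ] Matrix (Fin (n-1)) (Fin (n-1)) ℝ :=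
    { toFun := fun M => Matrix.of fun i j => M (Fin.castLE hle i) (Fin.castLE hle j)
      map_add' := fun a b => rfl
      map_smul' := fun c a => rfl }
  let ψ := φ.comp (V n).subtype
  have hψ : Function.Injective ψ := by
    rw [← LinearMap.ker_eq_bot, LinearMap.ker_eq_bot']
    intro m hm
    obtain ⟨hm1, hm2⟩ := m.2
    have hz : m.1 = 0 := by
      apply zero_of_V_block hn _ hm1 hm2
      intro i j hi hj
      have := congr_fun (congr_fun (show φ m.1 = 0 from hm) ⟨i.val, hi⟩) ⟨j.val, hj⟩
      exact this
    exact Subtype.ext hz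
  have hrank : Module.finrank ℝ (V n) ≤ (n - 1) ^ 2 := by
    have := LinearMap.finrank_le_finrank_of_injective hψ
    rw [Module.finrank_matrix] at this
    simpa [sq] using this
  have hcard2 : Fintype.card {x : t // x ≠ i₀} = t.card - 1 := by
    rw [Fintype.card_subtype_compl]
    simp [Fintype.card_coe]
  have h1le : 1 ≤ t.card := Finset.card_pos.2 ⟨p₀, hp₀⟩
  omega




lemma exists_finset (hn : 1 ≤ n) {A : Matrix (Fin n) (Fin n) ℝ}
    (h0 : ∀ i j, 0 ≤ A i j) (hr : ∀ i, ∑ j, A i j = 1) (hc : ∀ j, ∑ i, A i j = 1)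
    (herd : ip A A = ⨆ σ : Equiv.Perm (Fin n), ∑ i, A i (σ i)) :
    ∃ S : Finset (Equiv.Perm (Fin n)), S.Nonempty ∧ S.card ≤ (n - 1) ^ 2 + 1 ∧
      A ∈ convexHull ℝ ((fun σ : Equiv.Perm (Fin n) => σ.permMatrix ℝ) '' ↑S) ∧
      ∀ σ ∈ S, ip A (σ.permMatrix ℝ) = ip A A := by
  classical
  have hds : A ∈ doublyStochastic ℝ (Fin n) := mem_doublyStochastic_iff_sum.2 ⟨h0, hr, hc⟩
  obtain ⟨w, hw0, hw1, hwA⟩ := exists_eq_sum_perm_of_mem_doublyStochastic hds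
  have hle : ∀ σ : Equiv.Perm (Fin n), ip A (σ.permMatrix ℝ) ≤ ip A A := by
    intro σ
    rw [ip_perm, herd]
    exact le_ciSup (f := fun σ : Equiv.Perm (Fin n) => ∑ i, A i (σ i)) (Set.Finite.bddAbove (Set.finite_range _)) σ
  have hipA : ∑ σ : Equiv.Perm (Fin n), w σ * ip A (σ.permMatrix ℝ) = ip A A := by
    rw [← ip_sum_smul, hwA]
  have hkey : ∀ σ : Equiv.Perm (Fin n), w σ ≠ 0 → ip A (σ.permMatrix ℝ) = ip A A := by
    have hsum0 : ∑ σ : Equiv.Perm (Fin n), w σ * (ip A A - ip A (σ.permMatrix ℝ)) = 0 := by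
      simp only [mul_sub]
      rw [Finset.sum_sub_distrib, ← Finset.sum_mul, hw1, one_mul, hipA, sub_self]
    intro σ hσ
    have h := (Finset.sum_eq_zero_iff_of_nonneg
      (fun σ _ => mul_nonneg (hw0 σ) (sub_nonneg.2 (hle σ)))).1 hsum0 σ (Finset.mem_univ σ)
    rcases mul_eq_zero.1 h with h' | h'
    · exact absurd h' hσ
    · linarith [sub_eq_zero.1 h']
  set S₁ := Finset.univ.filter (fun σ : Equiv.Perm (Fin n) => w σ ≠ 0) with hS₁
  have hzero : ∀ σ ∈ Finset.univ, σ ∉ S₁ → w σ = 0 := by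
    intro σ _ hσ
    simpa [hS₁] using hσ
  have hsub : ∑ σ ∈ S₁, w σ • σ.permMatrix ℝ = A := by
    rw [Finset.sum_subset (Finset.subset_univ _) (fun σ h h' => by rw [hzero σ h h', zero_smul])]
    exact hwA
  have hw1' : ∑ σ ∈ S₁, w σ = 1 := by
    rw [Finset.sum_subset (Finset.subset_univ _) hzero]
    exact hw1
  have hAmem : A ∈ convexHull ℝ ((fun σ : Equiv.Perm (Fin n) => σ.permMatrix ℝ) '' ↑S₁) := by
    have hcm := Finset.centerMass_mem_convexHull (t := S₁) (w := w)
      (z := fun σ : Equiv.Perm (Fin n) => σ.permMatrix ℝ)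
      (fun σ _ => hw0 σ) (by rw [hw1']; norm_num)
      (fun σ hσ => Set.mem_image_of_mem (fun σ : Equiv.Perm (Fin n) => σ.permMatrix ℝ) (Finset.mem_coe.2 hσ))
    rwa [Finset.centerMass_eq_of_sum_1 _ _ hw1', hsub] at hcm
  rw [convexHull_eq_union] at hAmem
  simp only [Set.mem_iUnion] at hAmem
  obtain ⟨t, hts, hai, hAt⟩ := hAmem
  have htne : t.Nonempty := by
    rcases Finset.eq_empty_or_nonempty t with h | h
    · subst h; simp at hAt
    · exact h
  have htperm : ∀ P ∈ t, ∃ σ ∈ S₁, σ.permMatrix ℝ = P := by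
    intro P hP
    obtain ⟨σ, hσ, rfl⟩ := hts hP
    exact ⟨σ, by exact_mod_cast hσ, rfl⟩
  have htsum : ∀ M ∈ t, (∀ i, ∑ j, M i j = 1) ∧ (∀ j, ∑ i, M i j = 1) := by
    intro M hM
    obtain ⟨σ, _, rfl⟩ := htperm M hM
    have := mem_doublyStochastic_iff_sum.1 (permMatrix_mem_doublyStochastic (σ := σ) (R := ℝ))
    exact ⟨this.2.1, this.2.2⟩
  have hcardt := card_le_of_affineIndependent hn t hai htsum htne
  set S := S₁.filter (fun σ : Equiv.Perm (Fin n) => σ.permMatrix ℝ ∈ t) with hS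
  have himage : S.image (fun σ : Equiv.Perm (Fin n) => σ.permMatrix ℝ) = t := by
    apply Finset.Subset.antisymm
    · intro P hP
      simp only [hS, Finset.mem_image, Finset.mem_filter] at hP
      obtain ⟨σ, ⟨_, h2⟩, rfl⟩ := hP
      exact h2
    · intro P hP
      obtain ⟨σ, hσ, rfl⟩ := htperm P hP
      exact Finset.mem_image_of_mem _ (Finset.mem_filter.2 ⟨hσ, hP⟩)
  have hScard : S.card = t.card := by
    rw [← himage, Finset.card_image_of_injective _ permMatrix_injective]
  refine ⟨S, ?_, ?_, ?_, ?_⟩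
  · rw [← Finset.card_pos, hScard]
    exact Finset.card_pos.2 htne
  · omega
  · have hts' : (↑t : Set (Matrix (Fin n) (Fin n) ℝ))
        = (fun σ : Equiv.Perm (Fin n) => σ.permMatrix ℝ) '' ↑S := by
      rw [← himage, Finset.coe_image]
    rwa [← hts']
  · intro σ hσ
    have : σ ∈ S₁ := Finset.mem_filter.1 hσ |>.1
    exact hkey σ (Finset.mem_filter.1 this).2

end ErdosFinAux

/-- For every `n ≥ 1` there are only finitely many `n × n` Erdős matrices; more precisely,
their number is at most `∑_{j=1}^{(n-1)²+1} C(n!, j)`. -/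
theorem finitely_many_erdos (n : ℕ) (hn : 1 ≤ n) :
    {A : Matrix (Fin n) (Fin n) ℝ | IsErdos A}.Finite ∧
    {A : Matrix (Fin n) (Fin n) ℝ | IsErdos A}.ncard ≤
      ∑ j ∈ Finset.Icc 1 ((n - 1) ^ 2 + 1), (Nat.factorial n).choose j := by
  classical
  set E := {A : Matrix (Fin n) (Fin n) ℝ | IsErdos A} with hE
  have hexists : ∀ A ∈ E, ∃ S : Finset (Equiv.Perm (Fin n)), S.Nonempty ∧
      S.card ≤ (n - 1) ^ 2 + 1 ∧
      A ∈ convexHull ℝ ((fun σ : Equiv.Perm (Fin n) => σ.permMatrix ℝ) '' ↑S) ∧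
      ∀ σ ∈ S, ErdosFinAux.ip A (σ.permMatrix ℝ) = ErdosFinAux.ip A A := by
    intro A hA
    obtain ⟨⟨h0, hr, hc⟩, hfe⟩ := hA
    apply ErdosFinAux.exists_finset hn h0 hr hc
    have hq : frobSq A = ErdosFinAux.ip A A := by
      simp [frobSq, ErdosFinAux.ip, pow_two]
    rw [← hq, hfe, maxTr]
  choose! S hS1 hS2 hS3 hS4 using hexists
  have hinj : Set.InjOn S E := by
    intro A hA B hB hAB
    refine ErdosFinAux.eq_of_key (hS3 A hA) ?_ ?_ ?_
    · rintro P ⟨σ, hσ, rfl⟩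
      exact hS4 A hA σ (by exact_mod_cast hσ)
    · rw [hAB]; exact hS3 B hB
    · rintro P ⟨σ, hσ, rfl⟩
      rw [hAB] at hσ
      exact hS4 B hB σ (by exact_mod_cast hσ)
  set T : Finset (Finset (Equiv.Perm (Fin n))) :=
    (Finset.Icc 1 ((n - 1) ^ 2 + 1)).biUnion
      (fun j => Finset.powersetCard j Finset.univ) with hT
  have hmemT : ∀ A ∈ E, S A ∈ T := by
    intro A hA
    simp only [hT, Finset.mem_biUnion, Finset.mem_Icc, Finset.mem_powersetCard]
    exact ⟨(S A).card, ⟨Finset.card_pos.2 (hS1 A hA), hS2 A hA⟩,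
      ⟨Finset.subset_univ _, rfl⟩⟩
  have himg : S '' E ⊆ ↑T := by
    rintro x ⟨A, hA, rfl⟩
    exact hmemT A hA
  have hfin : E.Finite :=
    Set.Finite.of_finite_image (Set.Finite.subset T.finite_toSet himg) hinj
  refine ⟨hfin, ?_⟩
  have h1 : E.ncard = (S '' E).ncard := (Set.ncard_image_of_injOn hinj).symm
  have h2 : (S '' E).ncard ≤ T.card := by
    rw [← Set.ncard_coe_finset]
    exact Set.ncard_le_ncard himg T.finite_toSet
  have h3 : T.card = ∑ j ∈ Finset.Icc 1 ((n - 1) ^ 2 + 1), (Nat.factorial n).choose j := by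
    rw [hT, Finset.card_biUnion]
    · refine Finset.sum_congr rfl fun j _ => ?_
      rw [Finset.card_powersetCard, Finset.card_univ, Fintype.card_perm, Fintype.card_fin]
    · intro a _ b _ hab
      refine Finset.disjoint_left.2 fun s hsa hsb => ?_
      rw [Finset.mem_powersetCard] at hsa hsb
      exact hab (hsa.2.symm.trans hsb.2)
  calc E.ncard = (S '' E).ncard := h1
    _ ≤ T.card := h2
    _ = _ := h3
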